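/- Let p ≥ 1 be an integer, z' > p−1 and w' > −1 real numbers, and λ_1 ≥ λ_2 ≥ ⋯ ≥ λ_p ≥ 0 integers. Set K(i) = i(i+w'+z'+1−p), let 𝒟_{z',w',p} = ∑_{j=1}^{p} [x_j(1−x_j)·∂²/∂x_j² + (w'+1 − (w'+z'−p+2)x_j)·∂/∂x_j], and let W(x_1,…,x_p) = det[Jac^{λ_i+p−i}_{z'−p,w'}(x_j)]_{i,j=1,…,p}. Then 𝒟_{z',w',p} W = −(∑_{j=1}^{p} K(λ_j+p−j)) · W identically. Consequently, the multivariate Jacobi polynomial Jac^λ = W/V, where V = ∏_{i<j}(x_j−x_i), satisfies (1/V)·𝒟_{z',w',p}(V·Jac^λ) + K_{p,z',w'}·Jac^λ = (K_{p,z',w'} − ∑_{j=1}^{p} K(λ_j+p−j))·Jac^λ on the set where all x_i are distinct, with K_{p,z',w'} = ∑_{i=0}^{p−1} K(i). -/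

import Mathlib

open Finset

/-- Pochhammer symbol `(a)_j = a(a+1)⋯(a+j−1)`. -/
noncomputable def poch (a : ℝ) (j : ℕ) : ℝ := ∏ m ∈ Finset.range j, (a + m)

/-- The (shifted) Jacobi polynomial on `(0,1)`:
`Jac^n_{α,β}(x) = ((α+1)_n / n!) · Σ_{j=0}^{n} (−n)_j (n+α+β+1)_j / ((α+1)_j j!) · (1−x)^j`. -/
noncomputable def jac (n : ℕ) (α β : ℝ) (x : ℝ) : ℝ :=
  poch (α + 1) n / (Nat.factorial n : ℝ)
    * ∑ j ∈ Finset.range (n + 1),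
        poch (-(n : ℝ)) j * poch ((n : ℝ) + α + β + 1) j
          / (poch (α + 1) j * (Nat.factorial j : ℝ)) * (1 - x) ^ j

/-- coefficient of `(1-x)^j` in `jac n α β`. -/
noncomputable def jacC (n : ℕ) (α β : ℝ) (j : ℕ) : ℝ :=
  poch (α + 1) n / (Nat.factorial n : ℝ)
    * (poch (-(n : ℝ)) j * poch ((n : ℝ) + α + β + 1) j
        / (poch (α + 1) j * (Nat.factorial j : ℝ)))

lemma jac_eq_sum (n : ℕ) (α β x : ℝ) :
    jac n α β x = ∑ j ∈ Finset.range (n + 1), jacC n α β j * (1 - x) ^ j := by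
  rw [jac, Finset.mul_sum]
  refine Finset.sum_congr rfl fun j _ => ?_
  rw [jacC]; ring

noncomputable def jacD (n : ℕ) (α β : ℝ) (x : ℝ) : ℝ :=
  ∑ j ∈ Finset.range (n + 1), jacC n α β j * (-(j : ℝ) * (1 - x) ^ (j - 1))

noncomputable def jacD2 (n : ℕ) (α β : ℝ) (x : ℝ) : ℝ :=
  ∑ j ∈ Finset.range (n + 1), jacC n α β j * ((j : ℝ) * ((j : ℝ) - 1) * (1 - x) ^ (j - 2))

lemma hasDerivAt_jac (n : ℕ) (α β : ℝ) (x : ℝ) :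
    HasDerivAt (jac n α β) (jacD n α β x) x := by
  have hfun : jac n α β = fun x => ∑ j ∈ Finset.range (n + 1), jacC n α β j * (1 - x) ^ j :=
    funext fun x => jac_eq_sum n α β x
  rw [hfun, jacD]
  refine HasDerivAt.fun_sum fun j _ => ?_
  have h := (((hasDerivAt_id x).const_sub 1).pow j).const_mul (jacC n α β j)
  simpa [id_eq] using h.congr_deriv (by simp only [id_eq]; ring)

lemma hasDerivAt_jacD (n : ℕ) (α β : ℝ) (x : ℝ) :
    HasDerivAt (jacD n α β) (jacD2 n α β x) x := by
  unfold jacD jacD2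
  refine HasDerivAt.fun_sum fun j _ => ?_
  have h := (((hasDerivAt_id x).const_sub 1).pow (j - 1)).const_mul (jacC n α β j * (-(j : ℝ)))
  have h2 : HasDerivAt (fun x => jacC n α β j * (-(j : ℝ) * (1 - x) ^ (j - 1)))
      (jacC n α β j * (-(j : ℝ)) * ((↑(j - 1) : ℝ) * (1 - x) ^ (j - 1 - 1) * -1)) x := by
    refine (h.congr_deriv (by simp only [id_eq])).congr_of_eventuallyEq ?_
    filter_upwards with t; simp only [id_eq, Pi.pow_apply]; ring
  refine h2.congr_deriv ?_
  match j with
  | 0 => simp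
  | Nat.succ k =>
    push_cast [Nat.succ_sub_one]
    ring

lemma poch_pos {a : ℝ} (ha : 0 < a) (j : ℕ) : 0 < poch a j := by
  refine Finset.prod_pos fun m _ => ?_
  positivity

lemma jacC_rec (n : ℕ) (α β : ℝ) (hα : -1 < α) (j : ℕ) :
    jacC n α β (j + 1) * (((j : ℝ) + 1) * ((j : ℝ) + 1 + α))
      = jacC n α β j * ((((j : ℝ) - n)) * ((j : ℝ) + n + α + β + 1)) := by
  have hp : (0 : ℝ) < poch (α + 1) j := poch_pos (by linarith) j
  have hf : ((Nat.factorial j : ℝ)) ≠ 0 := Nat.cast_ne_zero.2 (Nat.factorial_ne_zero j)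
  have hj0 : (0:ℝ) ≤ (j:ℝ) := Nat.cast_nonneg j
  have hja : (α + 1 + (j : ℝ)) ≠ 0 := by linarith
  have hj1 : ((j : ℝ) + 1) ≠ 0 := by linarith
  have hpne : poch (α + 1) j ≠ 0 := ne_of_gt hp
  unfold jacC
  rw [show poch (-(n:ℝ)) (j+1) = poch (-(n:ℝ)) j * (-(n:ℝ) + j) from Finset.prod_range_succ _ j,
    show poch ((n:ℝ) + α + β + 1) (j+1) = poch ((n:ℝ) + α + β + 1) j * ((n:ℝ) + α + β + 1 + j)
      from Finset.prod_range_succ _ j,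
    show poch (α + 1) (j+1) = poch (α + 1) j * (α + 1 + j) from Finset.prod_range_succ _ j,
    Nat.factorial_succ]
  push_cast
  field_simp
  ring

lemma jac_ode (n : ℕ) (α β : ℝ) (hα : -1 < α) (x : ℝ) :
    x * (1 - x) * jacD2 n α β x + (β + 1 - (α + β + 2) * x) * jacD n α β x
      = -((n : ℝ) * ((n : ℝ) + α + β + 1)) * jac n α β x := by
  rw [jac_eq_sum]
  unfold jacD jacD2
  rw [Finset.mul_sum, Finset.mul_sum, Finset.mul_sum]
  have key : ∀ j ∈ Finset.range (n + 1),
      x * (1 - x) * (jacC n α β j * ((j : ℝ) * ((j : ℝ) - 1) * (1 - x) ^ (j - 2)))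
        + (β + 1 - (α + β + 2) * x) * (jacC n α β j * (-(j : ℝ) * (1 - x) ^ (j - 1)))
      = (jacC n α β j * ((j : ℝ) * ((j : ℝ) + α)) * (1 - x) ^ (j - 1)
          - jacC n α β j * (((j : ℝ) - n) * ((j : ℝ) + n + α + β + 1)) * (1 - x) ^ j)
        + (-((n : ℝ) * ((n : ℝ) + α + β + 1))) * (jacC n α β j * (1 - x) ^ j) := by
    intro j _
    match j with
    | 0 => push_cast; ring
    | 1 => push_cast; ring
    | Nat.succ (Nat.succ k) =>
      have e1 : k.succ.succ - 2 = k := rfl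
      have e2 : k.succ.succ - 1 = k + 1 := rfl
      rw [e1, e2, show k.succ.succ = k + 2 from rfl]
      push_cast
      ring
  rw [← Finset.sum_add_distrib, Finset.sum_congr rfl key, Finset.sum_add_distrib,
    Finset.sum_sub_distrib]
  have hs : ∑ j ∈ Finset.range (n + 1),
        jacC n α β j * ((j : ℝ) * ((j : ℝ) + α)) * (1 - x) ^ (j - 1)
      = ∑ j ∈ Finset.range (n + 1),
        jacC n α β j * (((j : ℝ) - n) * ((j : ℝ) + n + α + β + 1)) * (1 - x) ^ j := by
    rw [Finset.sum_range_succ' _ n, Finset.sum_range_succ]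
    have h0 : jacC n α β 0 * ((0 : ℝ) * ((0 : ℝ) + α)) * (1 - x) ^ (0 - 1) = 0 := by
      norm_num
    have hn : jacC n α β n * (((n : ℝ) - n) * ((n : ℝ) + n + α + β + 1)) * (1 - x) ^ n = 0 := by
      norm_num
    rw [show ((0:ℕ) : ℝ) * (((0:ℕ) : ℝ) + α) = (0:ℝ) * ((0:ℝ) + α) by norm_num] at *
    rw [h0, hn, add_zero, add_zero]
    refine Finset.sum_congr rfl fun j _ => ?_
    have e : j + 1 - 1 = j := rfl
    rw [e]
    have hrec := jacC_rec n α β hα j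
    push_cast
    linear_combination (1 - x) ^ j * hrec
  rw [hs]
  ring

/-- The Vandermonde polynomial `V(x_1,…,x_p) = ∏_{i<j}(x_j − x_i)`. -/
noncomputable def vandR (p : ℕ) (x : Fin p → ℝ) : ℝ :=
  ∏ i : Fin p, ∏ j ∈ Finset.univ.filter (fun j : Fin p => i < j), (x j - x i)

/-- The operator
`𝒟_{z',w',p} = ∑_j [x_j(1−x_j)·∂²/∂x_j² + (w'+1 − (w'+z'−p+2)x_j)·∂/∂x_j]`
applied to a function `f : ℝ^p → ℝ` at the point `x`. -/
noncomputable def Dop (p : ℕ) (z' w' : ℝ) (f : (Fin p → ℝ) → ℝ) (x : Fin p → ℝ) : ℝ :=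
  ∑ j : Fin p,
    (x j * (1 - x j) * iteratedDeriv 2 (fun t => f (Function.update x j t)) (x j)
      + (w' + 1 - (w' + z' - p + 2) * x j)
        * deriv (fun t => f (Function.update x j t)) (x j))

/-- `K(i) = i(i+w'+z'+1−p)`. -/
noncomputable def Kfun (p : ℕ) (z' w' : ℝ) (n : ℕ) : ℝ :=
  (n : ℝ) * ((n : ℝ) + w' + z' + 1 - p)

/-- `W(x_1,…,x_p) = det[Jac^{λ_i+p−i}_{z'−p,w'}(x_j)]_{i,j=1,…,p}`; here `lam i`
stands for `λ_{i+1}`, so the degree `λ_i + p − i` (1-based) is `lam i + (p−1−i)`. -/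
noncomputable def Wdet (p : ℕ) (z' w' : ℝ) (lam : Fin p → ℕ) (x : Fin p → ℝ) : ℝ :=
  Matrix.det (Matrix.of fun i j : Fin p =>
    jac (lam i + (p - 1 - (i : ℕ))) (z' - p) w' (x j))

lemma wdet_eq_sum (p : ℕ) (z' w' : ℝ) (lam : Fin p → ℕ) (y : Fin p → ℝ) :
    Wdet p z' w' lam y = ∑ σ : Equiv.Perm (Fin p),
      ((Equiv.Perm.sign σ : ℤ) : ℝ)
        * ∏ i : Fin p, jac (lam (σ i) + (p - 1 - ((σ i) : ℕ))) (z' - p) w' (y i) := by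
  rw [Wdet, Matrix.det_apply']
  rfl

lemma dop_wdet (p : ℕ) (z' w' : ℝ) (hα : -1 < z' - p) (lam : Fin p → ℕ) (x : Fin p → ℝ) :
    Dop p z' w' (Wdet p z' w' lam) x
      = -(∑ j : Fin p, Kfun p z' w' (lam j + (p - 1 - (j : ℕ))))
          * Wdet p z' w' lam x := by
  classical
  set α := z' - p with hαdef
  set nn : Fin p → ℕ := fun i => lam i + (p - 1 - (i : ℕ)) with hnn
  -- coefficients
  set c : Fin p → Equiv.Perm (Fin p) → ℝ := fun j σ =>
    ((Equiv.Perm.sign σ : ℤ) : ℝ)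
      * ∏ i ∈ Finset.univ.erase j, jac (nn (σ i)) α w' (x i) with hc
  have hFx : ∀ j : Fin p, ∀ t : ℝ,
      Wdet p z' w' lam (Function.update x j t)
        = ∑ σ : Equiv.Perm (Fin p), c j σ * jac (nn (σ j)) α w' t := by
    intro j t
    rw [wdet_eq_sum]
    refine Finset.sum_congr rfl fun σ _ => ?_
    rw [hc]
    rw [mul_assoc]
    congr 1
    rw [mul_comm, ← Finset.mul_prod_erase Finset.univ _ (Finset.mem_univ j)]
    congr 1
    · rw [Function.update_self]
    · refine Finset.prod_congr rfl fun i hi => ?_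
      rw [Function.update_of_ne (Finset.mem_erase.1 hi).1]
  have hd1 : ∀ j : Fin p, ∀ t : ℝ,
      HasDerivAt (fun t => Wdet p z' w' lam (Function.update x j t))
        (∑ σ : Equiv.Perm (Fin p), c j σ * jacD (nn (σ j)) α w' t) t := by
    intro j t
    have : (fun t => Wdet p z' w' lam (Function.update x j t))
        = fun t => ∑ σ : Equiv.Perm (Fin p), c j σ * jac (nn (σ j)) α w' t :=
      funext (hFx j)
    rw [this]
    exact HasDerivAt.fun_sum fun σ _ => (hasDerivAt_jac _ _ _ t).const_mul _
  have hderiv1 : ∀ j : Fin p,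
      deriv (fun t => Wdet p z' w' lam (Function.update x j t))
        = fun t => ∑ σ : Equiv.Perm (Fin p), c j σ * jacD (nn (σ j)) α w' t :=
    fun j => funext fun t => (hd1 j t).deriv
  have hderiv2 : ∀ j : Fin p,
      iteratedDeriv 2 (fun t => Wdet p z' w' lam (Function.update x j t)) (x j)
        = ∑ σ : Equiv.Perm (Fin p), c j σ * jacD2 (nn (σ j)) α w' (x j) := by
    intro j
    rw [iteratedDeriv_succ, iteratedDeriv_one, hderiv1 j]
    exact (HasDerivAt.fun_sum fun σ _ => (hasDerivAt_jacD _ _ _ (x j)).const_mul _).deriv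
  rw [Dop]
  calc
    ∑ j : Fin p,
        (x j * (1 - x j) * iteratedDeriv 2 (fun t => Wdet p z' w' lam (Function.update x j t)) (x j)
          + (w' + 1 - (w' + z' - ↑p + 2) * x j)
            * deriv (fun t => Wdet p z' w' lam (Function.update x j t)) (x j))
      = ∑ j : Fin p, ∑ σ : Equiv.Perm (Fin p),
          c j σ * (x j * (1 - x j) * jacD2 (nn (σ j)) α w' (x j)
            + (w' + 1 - (α + w' + 2) * x j) * jacD (nn (σ j)) α w' (x j)) := by
        refine Finset.sum_congr rfl fun j _ => ?_
        rw [hderiv2 j, hderiv1 j, Finset.mul_sum, Finset.mul_sum, ← Finset.sum_add_distrib]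
        refine Finset.sum_congr rfl fun σ _ => ?_
        rw [hαdef]; ring
    _ = ∑ j : Fin p, ∑ σ : Equiv.Perm (Fin p),
          (-(Kfun p z' w' (nn (σ j)))) * (c j σ * jac (nn (σ j)) α w' (x j)) := by
        refine Finset.sum_congr rfl fun j _ => Finset.sum_congr rfl fun σ _ => ?_
        rw [jac_ode (nn (σ j)) α w' hα (x j)]
        rw [Kfun, hαdef]; ring
    _ = ∑ σ : Equiv.Perm (Fin p), ∑ j : Fin p,
          (-(Kfun p z' w' (nn (σ j))))
            * (((Equiv.Perm.sign σ : ℤ) : ℝ) * ∏ i : Fin p, jac (nn (σ i)) α w' (x i)) := by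
        rw [Finset.sum_comm]
        refine Finset.sum_congr rfl fun σ _ => Finset.sum_congr rfl fun j _ => ?_
        congr 1
        rw [hc, mul_assoc]
        congr 1
        rw [mul_comm, ← Finset.mul_prod_erase Finset.univ _ (Finset.mem_univ j)]
    _ = ∑ σ : Equiv.Perm (Fin p),
          (-(∑ j : Fin p, Kfun p z' w' (nn j)))
            * (((Equiv.Perm.sign σ : ℤ) : ℝ) * ∏ i : Fin p, jac (nn (σ i)) α w' (x i)) := by
        refine Finset.sum_congr rfl fun σ _ => ?_
        rw [← Finset.sum_mul]
        congr 1
        rw [Finset.sum_neg_distrib, Equiv.sum_comp σ fun j => Kfun p z' w' (nn j)]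
    _ = -(∑ j : Fin p, Kfun p z' w' (nn j)) * Wdet p z' w' lam x := by
        rw [← Finset.mul_sum, wdet_eq_sum]

lemma vandR_ne_zero {p : ℕ} {x : Fin p → ℝ} (hx : ∀ i j : Fin p, i ≠ j → x i ≠ x j) :
    vandR p x ≠ 0 := by
  rw [vandR]
  refine Finset.prod_ne_zero_iff.2 fun i _ => Finset.prod_ne_zero_iff.2 fun j hj => ?_
  have hij : i < j := (Finset.mem_filter.1 hj).2
  exact sub_ne_zero_of_ne (hx j i (ne_of_gt hij))

lemma continuous_vandR (p : ℕ) : Continuous (vandR p) := by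
  unfold vandR
  exact continuous_finset_prod _ fun i _ => continuous_finset_prod _ fun j _ =>
    (continuous_apply j).sub (continuous_apply i)

/-- `𝒟_{z',w',p} W = −(∑_j K(λ_j+p−j))·W`, and consequently the
multivariate Jacobi polynomial `Jac^λ = W/V` satisfies
`(1/V)·𝒟_{z',w',p}(V·Jac^λ) + K_{p,z',w'}·Jac^λ
  = (K_{p,z',w'} − ∑_j K(λ_j+p−j))·Jac^λ` where all `x_i` are distinct,
with `K_{p,z',w'} = ∑_{i=0}^{p−1} K(i)`. -/
theorem multivariate_jacobi_eigenfunction (p : ℕ) (hp : 1 ≤ p)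
    (z' w' : ℝ) (hz : z' > (p : ℝ) - 1) (hw : w' > -1)
    (lam : Fin p → ℕ) (hmono : ∀ i j : Fin p, i ≤ j → lam j ≤ lam i) :
    (∀ x : Fin p → ℝ,
      Dop p z' w' (Wdet p z' w' lam) x
        = -(∑ j : Fin p, Kfun p z' w' (lam j + (p - 1 - (j : ℕ))))
            * Wdet p z' w' lam x)
    ∧ ∀ x : Fin p → ℝ, (∀ i j : Fin p, i ≠ j → x i ≠ x j) →
        (1 / vandR p x)
            * Dop p z' w' (fun y => vandR p y * (Wdet p z' w' lam y / vandR p y)) x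
          + (∑ i ∈ Finset.range p, Kfun p z' w' i) * (Wdet p z' w' lam x / vandR p x)
        = ((∑ i ∈ Finset.range p, Kfun p z' w' i)
              - ∑ j : Fin p, Kfun p z' w' (lam j + (p - 1 - (j : ℕ))))
            * (Wdet p z' w' lam x / vandR p x) := by
  have hα : -1 < z' - p := by linarith
  refine ⟨fun x => dop_wdet p z' w' hα lam x, fun x hx => ?_⟩
  have hV : vandR p x ≠ 0 := vandR_ne_zero hx
  -- Dop of V·(W/V) equals Dop of W at x
  have hDop : Dop p z' w' (fun y => vandR p y * (Wdet p z' w' lam y / vandR p y)) x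
      = Dop p z' w' (Wdet p z' w' lam) x := by
    unfold Dop
    refine Finset.sum_congr rfl fun j _ => ?_
    have hcont : Continuous fun t => vandR p (Function.update x j t) := by
      refine (continuous_vandR p).comp (continuous_pi fun i => ?_)
      simp only [Function.update_apply]
      split_ifs
      · exact continuous_id
      · exact continuous_const
    have hne : vandR p (Function.update x j (x j)) ≠ 0 := by
      rw [Function.update_eq_self]; exact hV
    have hev : (fun t => vandR p (Function.update x j t)
          * (Wdet p z' w' lam (Function.update x j t) / vandR p (Function.update x j t)))
        =ᶠ[nhds (x j)] fun t => Wdet p z' w' lam (Function.update x j t) := by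
      filter_upwards [hcont.continuousAt.eventually_ne hne] with t ht
      rw [mul_comm, div_mul_cancel₀ _ ht]
    rw [hev.deriv_eq, iteratedDeriv_succ, iteratedDeriv_one, iteratedDeriv_succ,
      iteratedDeriv_one, hev.deriv.deriv_eq]
  rw [hDop, dop_wdet p z' w' hα lam x]
  field_simp
  ring
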